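/- Let w₁ ⋖ₖ w₂ ⋖ₖ ⋯ ⋖ₖ w_d be an increasing k-chain in Sₙ with w_m = w_{m+1}·t_{a_m, b_m} where a_m ≤ k < b_m. Then the indices b₁, …, b_{d-1} are pairwise distinct, and moreover for any j > k, w₁(j) ≠ w_d(j) if and only if j ∈ {b₁, …, b_{d-1}}. Consequently the chain length d-1 equals (n-k) minus the number of positions j > k with w₁(j) = w_d(j). -/

import Mathlib

/-- Number of inversions of a permutation of `Fin n`. -/
def invCount {n : ℕ} (w : Equiv.Perm (Fin n)) : ℕ :=
  (Finset.univ.filter (fun p : Fin n × Fin n => p.1 < p.2 ∧ w p.2 < w p.1)).card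

/-- `w ∈ Sₙ^{k↘}` (1-indexed: `w(k+1) > ⋯ > w(n)`); positions are 0-indexed here. -/
def DescFrom (n k : ℕ) (w : Equiv.Perm (Fin n)) : Prop :=
  ∀ p q : Fin n, k ≤ (p : ℕ) → p < q → w q < w p

/-- `u ⋖ₖ w` : cover in the `k`-Bruhat order (1-indexed `k`; positions 0-indexed,
so `i ≤ k < j` becomes `↑i < k ≤ ↑j`). -/
def kCover (n k : ℕ) (u w : Equiv.Perm (Fin n)) : Prop :=
  ∃ i j : Fin n, (i : ℕ) < k ∧ k ≤ (j : ℕ) ∧ u = w * Equiv.swap i j ∧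
    invCount w = invCount u + 1

/-- An increasing `k`-chain `v 0 ⋖ₖ v 1 ⋖ₖ ⋯ ⋖ₖ v d`, with
`v m = v (m+1) * swap (a m) (b m)` and strictly increasing smaller swapped values
`v m (a m)`. -/
def IsIncKChain (n k : ℕ) {d : ℕ} (v : Fin (d + 1) → Equiv.Perm (Fin n))
    (a b : Fin d → Fin n) : Prop :=
  (∀ m : Fin d, (a m : ℕ) < k ∧ k ≤ (b m : ℕ) ∧
      v m.castSucc = v m.succ * Equiv.swap (a m) (b m) ∧
      invCount (v m.succ) = invCount (v m.castSucc) + 1) ∧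
  ∀ m m' : Fin d, m < m' → v m.castSucc (a m) < v m'.castSucc (a m')

/-- There is an increasing `k`-chain of length `d` (number of covers) from `u` to `w`. -/
def ExIncKChainLen (n k d : ℕ) (u w : Equiv.Perm (Fin n)) : Prop :=
  ∃ (v : Fin (d + 1) → Equiv.Perm (Fin n)) (a b : Fin d → Fin n),
    IsIncKChain n k v a b ∧ v 0 = u ∧ v (Fin.last d) = w


open Finset Equiv


lemma invCount_lt_mul_swap {n : ℕ} (u : Equiv.Perm (Fin n)) {x y : Fin n}
    (hxy : x < y) (hval : u x < u y) :
    invCount u < invCount (u * Equiv.swap x y) := by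
  set s := Equiv.swap x y with hs
  set w := u * s with hw
  have hxy' : x ≠ y := ne_of_lt hxy
  have happ : ∀ z, w z = u (s z) := fun z => rfl
  have hIu : invCount u = (Finset.univ.filter
      (fun p : Fin n × Fin n => p.1 < p.2 ∧ u p.2 < u p.1)).card := rfl
  set Iu := Finset.univ.filter (fun p : Fin n × Fin n => p.1 < p.2 ∧ u p.2 < u p.1) with hIudef
  set Iw := Finset.univ.filter (fun p : Fin n × Fin n => p.1 < p.2 ∧ w p.2 < w p.1) with hIwdef
  have hmemIu : ∀ p : Fin n × Fin n, p ∈ Iu ↔ p.1 < p.2 ∧ u p.2 < u p.1 := by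
    intro p; simp [hIudef]
  have hmemIw : ∀ p : Fin n × Fin n, p ∈ Iw ↔ p.1 < p.2 ∧ w p.2 < w p.1 := by
    intro p; simp [hIwdef]
  -- the map
  set cond := fun p : Fin n × Fin n => (p.1 = x ∧ p.2 < y) ∨ (p.2 = y ∧ x < p.1) with hcond
  set F := fun p : Fin n × Fin n => if cond p then p else (s p.1, s p.2) with hF
  have hsx : s x = y := Equiv.swap_apply_left x y
  have hsy : s y = x := Equiv.swap_apply_right x y
  have hsz : ∀ z, z ≠ x → z ≠ y → s z = z := fun z h1 h2 => Equiv.swap_apply_of_ne_of_ne h1 h2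
  -- F maps into A iff cond
  have hcondF : ∀ p ∈ Iu, (cond (F p) ↔ cond p) := by
    intro p hp
    rw [hmemIu] at hp
    by_cases hc : cond p
    · simp [hF, hc]
    · simp only [hF, if_neg hc]
      constructor
      · rintro (⟨h1, h2⟩ | ⟨h1, h2⟩)
        · -- s p.1 = x → p.1 = y → p.2 > y → s p.2 = p.2 > y
          have hp1 : p.1 = y := by
            by_contra hne
            rcases eq_or_ne p.1 x with he | hne2
            · rw [he, hsx] at h1; exact hxy' h1.symm
            · rw [hsz p.1 hne2 hne] at h1
              exact hne2 h1
          have hp2 : y < p.2 := hp1 ▸ hp.1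
          have : s p.2 = p.2 := hsz p.2 (fun hh => by subst hh; exact absurd hp2 (not_lt.mpr (le_of_lt hxy))) (ne_of_gt hp2)
          rw [this] at h2
          exact absurd h2 (not_lt.mpr (le_of_lt hp2))
        · -- s p.2 = y → p.2 = x → p.1 < x → s p.1 = p.1 < x
          have hp2 : p.2 = x := by
            by_contra hne
            rcases eq_or_ne p.2 y with he | hne2
            · rw [he, hsy] at h1; exact hxy' h1
            · rw [hsz p.2 hne hne2] at h1
              exact hne2 h1
          have hp1 : p.1 < x := hp2 ▸ hp.1
          have : s p.1 = p.1 := hsz p.1 (ne_of_lt hp1) (ne_of_lt (lt_trans hp1 hxy))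
          rw [this] at h2
          exact absurd h2 (not_lt.mpr (le_of_lt hp1))
      · intro hc2; exact absurd hc2 hc
  -- F maps Iu into Iw.erase (x,y)
  have hmaps : ∀ p ∈ Iu, F p ∈ Iw.erase (x, y) := by
    intro p hp
    have hp' := (hmemIu p).mp hp
    obtain ⟨hlt, hinv⟩ := hp'
    rw [Finset.mem_erase]
    by_cases hc : cond p
    · rw [hF]; simp only [if_pos hc]
      rcases hc with ⟨h1, h2⟩ | ⟨h1, h2⟩
      · -- p.1 = x, p.2 < y
        have hne : p ≠ (x, y) := by
          intro he; rw [he] at h2; exact absurd h2 (lt_irrefl y)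
        refine ⟨hne, (hmemIw _).mpr ⟨hlt, ?_⟩⟩
        have hs2 : s p.2 = p.2 := hsz p.2 (fun hh => by rw [h1, hh] at hlt; exact lt_irrefl x hlt) (ne_of_lt h2)
        rw [happ, happ, hs2, h1, hsx]
        rw [h1] at hinv
        exact lt_trans hinv hval
      · -- p.2 = y, x < p.1
        have hne : p ≠ (x, y) := by
          intro he; rw [he] at h2; exact absurd h2 (lt_irrefl x)
        refine ⟨hne, (hmemIw _).mpr ⟨hlt, ?_⟩⟩
        have hs1 : s p.1 = p.1 := hsz p.1 (ne_of_gt h2) (fun hh => by rw [hh, h1] at hlt; exact lt_irrefl y hlt)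
        rw [happ, happ, hs1, h1, hsy]
        rw [h1] at hinv
        exact lt_trans hval hinv
    · rw [hF]; simp only [if_neg hc]
      have hc1 : ¬(p.1 = x ∧ p.2 < y) := fun hh => hc (Or.inl hh)
      have hc2 : ¬(p.2 = y ∧ x < p.1) := fun hh => hc (Or.inr hh)
      have hne : (s p.1, s p.2) ≠ (x, y) := by
        intro he
        have h1 : s p.1 = x := congrArg Prod.fst he
        have h2 : s p.2 = y := congrArg Prod.snd he
        have : p.1 = y := by
          have := congrArg s h1; rwa [Equiv.swap_apply_self, hsx] at this
        have : p.2 = x := by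
          have := congrArg s h2; rwa [Equiv.swap_apply_self, hsy] at this
        rw [‹p.1 = y›, this] at hlt
        exact absurd (lt_trans hxy hlt) (lt_irrefl x)
      have hvw : w (s p.2) < w (s p.1) := by
        rw [happ, happ, Equiv.swap_apply_self, Equiv.swap_apply_self]; exact hinv
      have horder : s p.1 < s p.2 := by
        rcases eq_or_ne p.1 x with he1 | hne1
        · -- p.1 = x: then ¬ p.2 < y, and p.2 ≠ y (else (x,y) ∈ Iu contradicts hval)
          have hy2 : ¬ p.2 < y := (fun h' => hc1 ⟨he1, h'⟩)
          have hny : p.2 ≠ y := by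
            intro he2
            rw [he1, he2] at hinv
            exact absurd hval (not_lt.mpr (le_of_lt hinv))
          have : y < p.2 := lt_of_le_of_ne (not_lt.mp hy2) (Ne.symm hny)
          rw [he1, hsx, hsz p.2 (fun hh => by rw [he1, hh] at hlt; exact lt_irrefl x hlt) hny]
          exact this
        · rcases eq_or_ne p.2 y with he2 | hne2
          · have hx1 : p.1 < x := lt_of_le_of_ne (not_lt.mp (fun h' => hc2 ⟨he2, h'⟩)) hne1
            rw [he2, hsy, hsz p.1 hne1 (ne_of_lt (lt_trans hx1 hxy))]
            exact hx1
          · rcases eq_or_ne p.1 y with he1' | hne1'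
            · have h2big : y < p.2 := he1' ▸ hlt
              rw [he1', hsy, hsz p.2 (ne_of_gt (lt_trans hxy h2big)) hne2]
              exact lt_trans hxy h2big
            · rcases eq_or_ne p.2 x with he2' | hne2'
              · have h1small : p.1 < x := he2' ▸ hlt
                rw [he2', hsx, hsz p.1 hne1 hne1']
                exact lt_trans h1small hxy
              · rw [hsz p.1 hne1 hne1', hsz p.2 hne2' hne2]
                exact hlt
      exact ⟨hne, (hmemIw _).mpr ⟨horder, hvw⟩⟩
  -- injectivity
  have hinj : Set.InjOn F Iu := by
    intro p hp q hq heq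
    have hcp := hcondF p hp
    have hcq := hcondF q hq
    by_cases hc : cond p
    · have hcq' : cond q := by
        rw [← hcq, ← heq, hcp]; exact hc
      rw [hF] at heq; simpa [if_pos hc, if_pos hcq'] using heq
    · have hcq' : ¬ cond q := by
        rw [← hcq, ← heq, hcp]; exact hc
      rw [hF] at heq; simp only [if_neg hc, if_neg hcq'] at heq
      have h1 : s p.1 = s q.1 := congrArg Prod.fst heq
      have h2 : s p.2 = s q.2 := congrArg Prod.snd heq
      exact Prod.ext (s.injective h1) (s.injective h2)
  have hcard : Iu.card ≤ (Iw.erase (x, y)).card :=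
    Finset.card_le_card_of_injOn F hmaps hinj
  have hxyIw : (x, y) ∈ Iw := by
    rw [hmemIw]
    refine ⟨hxy, ?_⟩
    show w y < w x
    rw [happ, happ, hsx, hsy]
    exact hval
  have h1 : (Iw.erase (x, y)).card = Iw.card - 1 := Finset.card_erase_of_mem hxyIw
  have h2 : 1 ≤ Iw.card := Finset.card_pos.mpr ⟨_, hxyIw⟩
  show Iu.card < Iw.card
  omega

theorem stmt4 (n k d : ℕ) (hk1 : 1 ≤ k) (hk2 : k ≤ n - 1)
    (v : Fin (d + 1) → Equiv.Perm (Fin n)) (a b : Fin d → Fin n)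
    (h : IsIncKChain n k v a b) :
    Function.Injective b ∧
    (∀ j : Fin n, k ≤ (j : ℕ) →
      (v 0 j ≠ v (Fin.last d) j ↔ ∃ m : Fin d, b m = j)) ∧
    d = (n - k) -
      (Finset.univ.filter
        (fun j : Fin n => k ≤ (j : ℕ) ∧ v 0 j = v (Fin.last d) j)).card := by
  obtain ⟨hA, hInc⟩ := h
  have hak : ∀ m : Fin d, (a m : ℕ) < k := fun m => (hA m).1
  have hbk : ∀ m : Fin d, k ≤ (b m : ℕ) := fun m => (hA m).2.1
  have heqv : ∀ m : Fin d, v m.castSucc = v m.succ * Equiv.swap (a m) (b m) :=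
    fun m => (hA m).2.2.1
  have hlen : ∀ m : Fin d, invCount (v m.succ) = invCount (v m.castSucc) + 1 :=
    fun m => (hA m).2.2.2
  have hab : ∀ m : Fin d, a m < b m := fun m => by
    rw [Fin.lt_def]; exact lt_of_lt_of_le (hak m) (hbk m)
  have habne : ∀ m : Fin d, a m ≠ b m := fun m => ne_of_lt (hab m)
  have hswap_b : ∀ m : Fin d, v m.castSucc (b m) = v m.succ (a m) := fun m => by
    rw [heqv m]; simp [Equiv.Perm.mul_apply, Equiv.swap_apply_right]
  have hswap_a : ∀ m : Fin d, v m.castSucc (a m) = v m.succ (b m) := fun m => by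
    rw [heqv m]; simp [Equiv.Perm.mul_apply, Equiv.swap_apply_left]
  have hother : ∀ (m : Fin d) (j : Fin n), j ≠ a m → j ≠ b m →
      v m.castSucc j = v m.succ j := by
    intro m j hja hjb
    rw [heqv m]
    simp [Equiv.Perm.mul_apply, Equiv.swap_apply_of_ne_of_ne hja hjb]
  -- at each step the value at position `b m` strictly decreases
  have hC : ∀ m : Fin d, v m.castSucc (a m) < v m.castSucc (b m) := by
    intro m
    by_contra hcon
    have hne : v m.castSucc (a m) ≠ v m.castSucc (b m) :=
      fun he => habne m ((v m.castSucc).injective he)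
    have hlt : v m.castSucc (b m) < v m.castSucc (a m) :=
      lt_of_le_of_ne (not_lt.mp hcon) (Ne.symm hne)
    have hkey := invCount_lt_mul_swap (v m.succ) (hab m)
      (by rw [← hswap_b m, ← hswap_a m]; exact hlt)
    rw [← heqv m] at hkey
    have := hlen m
    omega
  -- M1 : if no b hits j before step t, the value at j is unchanged
  have M1 : ∀ (j : Fin n), k ≤ (j : ℕ) → ∀ t (ht : t ≤ d),
      (∀ m : Fin d, (m : ℕ) < t → b m ≠ j) →
      v ⟨t, Nat.lt_succ_of_le ht⟩ j = v 0 j := by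
    intro j hj t
    induction t with
    | zero =>
      intro ht _
      have h0 : (⟨0, Nat.lt_succ_of_le ht⟩ : Fin (d+1)) = 0 := by ext; simp
      rw [h0]
    | succ t ih =>
      intro ht hb
      have htd : t < d := ht
      set m : Fin d := ⟨t, htd⟩ with hm
      have hja : j ≠ a m := by
        intro he
        have := hak m
        rw [← he] at this
        omega
      have hjb : j ≠ b m := Ne.symm (hb m (Nat.lt_succ_self t))
      have hstep := hother m j hja hjb
      have hcs : m.castSucc = (⟨t, Nat.lt_succ_of_le (le_of_lt htd)⟩ : Fin (d+1)) := by
        ext; simp [hm]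
      have hsc : m.succ = (⟨t+1, Nat.lt_succ_of_le ht⟩ : Fin (d+1)) := by
        ext; simp [hm]
      rw [hcs, hsc] at hstep
      rw [← hstep]
      exact ih (le_of_lt htd) (fun m' hm' => hb m' (Nat.lt_succ_of_lt hm'))
  -- M2 : if some b hits j before step t, value at j at time t is c m' for the last hit m'
  have M2 : ∀ (j : Fin n), ∀ t (ht : t ≤ d),
      (∃ m : Fin d, (m : ℕ) < t ∧ b m = j) →
      ∃ m : Fin d, (m : ℕ) < t ∧ b m = j ∧
        v ⟨t, Nat.lt_succ_of_le ht⟩ j = v m.castSucc (a m) := by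
    intro j t
    induction t with
    | zero =>
      intro ht hex
      obtain ⟨m, hm, _⟩ := hex
      exact absurd hm (Nat.not_lt_zero _)
    | succ t ih =>
      intro ht hex
      obtain ⟨m0, hm0, hbm0⟩ := hex
      have htd : t < d := ht
      set mt : Fin d := ⟨t, htd⟩ with hmt
      have hsc : mt.succ = (⟨t+1, Nat.lt_succ_of_le ht⟩ : Fin (d+1)) := by
        ext; simp [hmt]
      by_cases hbt : b mt = j
      · refine ⟨mt, Nat.lt_succ_self t, hbt, ?_⟩
        rw [← hsc, ← hbt]
        exact (hswap_a mt).symm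
      · have hm0' : (m0 : ℕ) < t := by
          rcases Nat.lt_succ_iff_lt_or_eq.mp hm0 with hlt' | heq'
          · exact hlt'
          · exfalso
            apply hbt
            have : m0 = mt := Fin.ext heq'
            rw [← this]
            exact hbm0
        obtain ⟨m', hm', hbm', hv⟩ := ih (le_of_lt htd) ⟨m0, hm0', hbm0⟩
        refine ⟨m', Nat.lt_succ_of_lt hm', hbm', ?_⟩
        have hja : j ≠ a mt := by
          intro he
          have h1 := hak mt
          have h2 := hbk m'
          rw [← he] at h1
          rw [hbm'] at h2
          omega
        have hjb : j ≠ b mt := fun he => hbt he.symm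
        have hstep := hother mt j hja hjb
        have hcs : mt.castSucc = (⟨t, Nat.lt_succ_of_le (le_of_lt htd)⟩ : Fin (d+1)) := by
          ext; simp [hmt]
        rw [hcs, hsc] at hstep
        rw [← hstep]
        exact hv
  -- injectivity of b
  have binj_lt : ∀ m1 m2 : Fin d, m1 < m2 → b m1 ≠ b m2 := by
    intro m1 m2 hlt12 hbeq
    have hm2d : (m2 : ℕ) ≤ d := le_of_lt m2.isLt
    obtain ⟨m', hm', hbm', hv⟩ := M2 (b m2) m2 hm2d ⟨m1, hlt12, hbeq⟩
    have hcs : (⟨(m2 : ℕ), Nat.lt_succ_of_le hm2d⟩ : Fin (d+1)) = m2.castSucc := by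
      ext; simp
    rw [hcs] at hv
    have h1 := hC m2
    rw [hv] at h1
    have h2 := hInc m' m2 (Fin.lt_def.mpr hm')
    exact absurd (lt_trans h1 h2) (lt_irrefl _)
  have binj : Function.Injective b := by
    intro m1 m2 heq
    by_contra hne
    rcases lt_or_gt_of_ne hne with hlt' | hlt'
    · exact binj_lt m1 m2 hlt' heq
    · exact binj_lt m2 m1 hlt' heq.symm
  -- part 2
  have hlastmk : (⟨d, Nat.lt_succ_of_le le_rfl⟩ : Fin (d+1)) = Fin.last d := by
    ext; simp
  have part2 : ∀ j : Fin n, k ≤ (j : ℕ) →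
      (v 0 j ≠ v (Fin.last d) j ↔ ∃ m : Fin d, b m = j) := by
    intro j hj
    constructor
    · intro hne
      by_contra hnex
      push_neg at hnex
      have hM := M1 j hj d le_rfl (fun m _ => hnex m)
      rw [hlastmk] at hM
      exact hne hM.symm
    · rintro ⟨m, hbm⟩
      have hpre : v ⟨(m : ℕ), Nat.lt_succ_of_le (le_of_lt m.isLt)⟩ j = v 0 j := by
        apply M1 j hj (m : ℕ) (le_of_lt m.isLt)
        intro m' hm' he
        have : m' = m := binj (he.trans hbm.symm)
        rw [this] at hm'
        exact absurd hm' (lt_irrefl _)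
      have hcs : (⟨(m : ℕ), Nat.lt_succ_of_le (le_of_lt m.isLt)⟩ : Fin (d+1)) = m.castSucc := by
        ext; simp
      rw [hcs] at hpre
      obtain ⟨m'', _, hbm'', hv⟩ := M2 j d le_rfl ⟨m, m.isLt, hbm⟩
      have hmm : m'' = m := binj (hbm''.trans hbm.symm)
      rw [hmm] at hv
      rw [hlastmk] at hv
      have hCm := hC m
      rw [hbm] at hCm
      have hfin : v (Fin.last d) j < v 0 j := by
        rw [hv, ← hpre]
        exact hCm
      exact ne_of_gt hfin
  -- part 3
  have hkn : k < n := by omega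
  have hScard : (Finset.univ.filter (fun j : Fin n => k ≤ (j : ℕ))).card = n - k := by
    rw [← Nat.card_Ico k n]
    apply Finset.card_nbij' (fun j : Fin n => (j : ℕ))
      (fun x : ℕ => ⟨x % n, Nat.mod_lt _ (by omega)⟩)
    · intro j hj
      simp only [Finset.mem_coe, Finset.mem_filter, Finset.mem_univ, true_and] at hj
      exact Finset.mem_Ico.mpr ⟨hj, j.isLt⟩
    · intro x hx
      obtain ⟨hx1, hx2⟩ := Finset.mem_Ico.mp hx
      simp only [Finset.mem_coe, Finset.mem_filter, Finset.mem_univ, true_and]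
      simp [Nat.mod_eq_of_lt hx2]
      exact hx1
    · intro j hj
      ext
      simp [Nat.mod_eq_of_lt j.isLt]
    · intro x hx
      obtain ⟨hx1, hx2⟩ := Finset.mem_Ico.mp hx
      simp [Nat.mod_eq_of_lt hx2]
  set S := Finset.univ.filter (fun j : Fin n => k ≤ (j : ℕ)) with hS
  set B := Finset.image b Finset.univ with hB
  have hBS : B ⊆ S := by
    intro j hj
    obtain ⟨m, _, hm⟩ := Finset.mem_image.mp hj
    rw [hS]
    simp only [Finset.mem_filter, Finset.mem_univ, true_and]
    rw [← hm]
    exact hbk m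
  have hBcard : B.card = d := by
    rw [hB, Finset.card_image_of_injective _ binj, Finset.card_univ, Fintype.card_fin]
  have hdle : d ≤ n - k := by
    rw [← hBcard, ← hScard]
    exact Finset.card_le_card hBS
  have hT : Finset.univ.filter
      (fun j : Fin n => k ≤ (j : ℕ) ∧ v 0 j = v (Fin.last d) j) = S \ B := by
    ext j
    simp only [Finset.mem_filter, Finset.mem_univ, true_and, Finset.mem_sdiff]
    constructor
    · rintro ⟨hjk, hje⟩
      refine ⟨by rw [hS]; simp only [Finset.mem_filter, Finset.mem_univ, true_and]; exact hjk, ?_⟩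
      intro hjB
      obtain ⟨m, _, hm⟩ := Finset.mem_image.mp hjB
      exact absurd hje (fun he => ((part2 j hjk).mpr ⟨m, hm⟩) he)
    · rintro ⟨hjS, hjB⟩
      have hjk : k ≤ (j : ℕ) := by
        rw [hS] at hjS
        simpa using hjS
      refine ⟨hjk, ?_⟩
      by_contra hne
      obtain ⟨m, hm⟩ := (part2 j hjk).mp hne
      exact hjB (Finset.mem_image.mpr ⟨m, Finset.mem_univ _, hm⟩)
  refine ⟨binj, part2, ?_⟩
  rw [hT, Finset.card_sdiff_of_subset hBS, hScard, hBcard]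
  omega
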